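/- For each choice of sign σ ∈ {+, −}, setting h^σ = √(c |m^σ|): |h − h^σ| ≤ 2c² ( M' + (V₀')² √(c |m^σ|) / (4(1 + V₀)²) ). -/

import Mathlib

lemma stmt12_key (c r₀ u w M' D z₀ : ℝ) (hc : 0 < c) (hr₀pos : 0 < r₀) (hr₀le : r₀ ≤ c)
    (hzsq : z₀ ^ 2 = c ^ 2 - r₀ ^ 2) (hu : 1 ≤ u) (hw : 1 ≤ w)
    (hkey : r₀ ^ 2 * D = z₀ * u) (hM' : 0 ≤ M')
    (hdu : u - w ≤ M' * (2 * c)) (hdw : w - u ≤ M' * (2 * c)) :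
    |r₀ * u - c * w| ≤ 2 * c ^ 2 * (M' + D ^ 2 * (c * w) / (4 * u ^ 2)) := by
  have hu0 : (0:ℝ) < u := lt_of_lt_of_le one_pos hu
  have hw0 : (0:ℝ) < w := lt_of_lt_of_le one_pos hw
  have h4 : r₀ ^ 4 * D ^ 2 = z₀ ^ 2 * u ^ 2 := by
    linear_combination (r₀ ^ 2 * D + z₀ * u) * hkey
  have hterm : D ^ 2 * (c * w) / (4 * u ^ 2) = c * w * z₀ ^ 2 / (4 * r₀ ^ 4) := by
    rw [div_eq_div_iff (by positivity) (by positivity)]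
    linear_combination 4 * c * w * h4
  rw [hterm, abs_le]
  have hTpos : (0:ℝ) ≤ c * w * z₀ ^ 2 / (4 * r₀ ^ 4) := by positivity
  constructor
  · have hre : 2 * c ^ 2 * (c * w * z₀ ^ 2 / (4 * r₀ ^ 4))
        = 2 * c ^ 2 * (c * w * z₀ ^ 2) / (4 * r₀ ^ 4) := by ring
    have hT : w * (c - r₀) ≤ 2 * c ^ 2 * (c * w * z₀ ^ 2 / (4 * r₀ ^ 4)) := by
      rw [hre, le_div_iff₀ (by positivity : (0:ℝ) < 4 * r₀ ^ 4)]
      have hz2 : c ^ 3 * w * z₀ ^ 2 = c ^ 3 * w * c ^ 2 - c ^ 3 * w * r₀ ^ 2 := by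
        linear_combination (c ^ 3 * w) * hzsq
      nlinarith [hz2, mul_nonneg (mul_nonneg (le_of_lt hw0) (sub_nonneg.mpr hr₀le))
        (by nlinarith [mul_le_mul_of_nonneg_left (pow_le_pow_left₀ hr₀pos.le hr₀le 3) (by linarith : (0:ℝ) ≤ 2*r₀), mul_nonneg (pow_nonneg hc.le 3) (sub_nonneg.mpr hr₀le)] : (0:ℝ) ≤ c ^ 3 * (c + r₀) - 2 * r₀ ^ 4)]
    have hT2 : r₀ * (w - u) ≤ 2 * c ^ 2 * M' := by nlinarith
    nlinarith [hT, hT2]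
  · nlinarith [mul_le_mul_of_nonneg_left hr₀le (le_of_lt hu0)]
theorem stmt_12
    (c : ℝ) (hc : 0 < c)
    (V V' V'' : ℝ → ℝ)
    (hV1 : ∀ x ∈ Set.Icc (-c) c, HasDerivAt V (V' x) x)
    (hV2 : ∀ x ∈ Set.Icc (-c) c, HasDerivAt V' (V'' x) x)
    (hV2c : ContinuousOn V'' (Set.Icc (-c) c))
    (hVnn : ∀ x ∈ Set.Icc (-c) c, 0 ≤ V x)
    (r v : ℝ → ℝ)
    (hr : ∀ x, r x = Real.sqrt (c ^ 2 - x ^ 2))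
    (hv : ∀ x, v x = r x * (1 + V x))
    (z₀ : ℝ) (hz₀ : z₀ ∈ Set.Ioo (-c) c)
    (hmax : ∀ x ∈ Set.Icc (-c) c, v x ≤ v z₀)
    (M M' M'' : ℝ)
    (hM : IsLUB (V '' Set.Icc (-c) c) M)
    (hM' : IsLUB ((fun x => |V' x|) '' Set.Icc (-c) c) M')
    (hM'' : IsLUB ((fun x => |V'' x|) '' Set.Icc (-c) c) M'')
    (mp mm : ℝ)
    (hmp : mp = c * (1 + V c) ^ 2)
    (hmm : mm = -(c * (1 + V (-c)) ^ 2))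
    :
    |v z₀ - Real.sqrt (c * |mp|)| ≤ 2 * c ^ 2 * (M' + (V' z₀) ^ 2 * Real.sqrt (c * |mp|) / (4 * (1 + V z₀) ^ 2)) ∧
    |v z₀ - Real.sqrt (c * |mm|)| ≤ 2 * c ^ 2 * (M' + (V' z₀) ^ 2 * Real.sqrt (c * |mm|) / (4 * (1 + V z₀) ^ 2)) := by
  obtain ⟨hz1, hz2⟩ := hz₀
  have hzIcc : z₀ ∈ Set.Icc (-c) c := ⟨hz1.le, hz2.le⟩
  have hcIcc : c ∈ Set.Icc (-c) c := ⟨by linarith, le_refl c⟩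
  have hncIcc : -c ∈ Set.Icc (-c) c := ⟨le_refl _, by linarith⟩
  set r₀ := Real.sqrt (c ^ 2 - z₀ ^ 2) with hr₀def
  have hpos : 0 < c ^ 2 - z₀ ^ 2 := by nlinarith
  have hr₀pos : 0 < r₀ := Real.sqrt_pos.mpr hpos
  have hr₀sq : r₀ ^ 2 = c ^ 2 - z₀ ^ 2 := Real.sq_sqrt hpos.le
  have hr₀le : r₀ ≤ c := by nlinarith
  -- derivative of v at z₀ vanishes
  have hVd := hV1 z₀ hzIcc
  have hinner : HasDerivAt (fun x : ℝ => c ^ 2 - x ^ 2) (-(2 * z₀)) z₀ := by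
    simpa using (hasDerivAt_pow 2 z₀).const_sub (c ^ 2)
  have hRd : HasDerivAt (fun x => Real.sqrt (c ^ 2 - x ^ 2)) (-z₀ / r₀) z₀ := by
    have h2 := (Real.hasDerivAt_sqrt (ne_of_gt hpos)).comp z₀ hinner
    have h3 : -z₀ / r₀ = 1 / (2 * √(c ^ 2 - z₀ ^ 2)) * -(2 * z₀) := by
      field_simp
      ring
    rw [h3]; exact h2
  have hveq : v = fun x => Real.sqrt (c ^ 2 - x ^ 2) * (1 + V x) :=
    funext fun x => by rw [hv, hr]
  have hvD : HasDerivAt v ((-z₀ / r₀) * (1 + V z₀) + r₀ * V' z₀) z₀ := by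
    rw [hveq]
    exact hRd.mul (hVd.const_add 1)
  have hloc : IsLocalMax v z₀ := by
    have hnhds : Set.Icc (-c) c ∈ nhds z₀ := Icc_mem_nhds hz1 hz2
    exact Filter.eventually_of_mem hnhds hmax
  have hzero : (-z₀ / r₀) * (1 + V z₀) + r₀ * V' z₀ = 0 := hloc.hasDerivAt_eq_zero hvD
  have hkey : r₀ ^ 2 * V' z₀ = z₀ * (1 + V z₀) := by
    have h := mul_eq_zero_of_left hzero r₀
    field_simp at h
    linarith [h]
  -- bounds on V'
  have hM'bound : ∀ x ∈ Set.Icc (-c) c, |V' x| ≤ M' := fun x hx =>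
    hM'.1 ⟨x, hx, rfl⟩
  have hM'nn : 0 ≤ M' := le_trans (abs_nonneg _) (hM'bound z₀ hzIcc)
  -- Lipschitz bound via MVT
  have hlip : ∀ x ∈ Set.Icc (-c) c, ∀ y ∈ Set.Icc (-c) c, |V y - V x| ≤ M' * |y - x| := by
    intro x hx y hy
    have := Convex.norm_image_sub_le_of_norm_hasDerivWithin_le
      (f := V) (f' := V') (s := Set.Icc (-c) c) (C := M')
      (fun t ht => (hV1 t ht).hasDerivWithinAt)
      (fun t ht => by simpa using hM'bound t ht)
      (convex_Icc _ _) hx hy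
    simpa [Real.norm_eq_abs] using this
  have hdiff : ∀ x ∈ Set.Icc (-c) c, |V x - V z₀| ≤ M' * (2 * c) := by
    intro x hx
    calc |V x - V z₀| ≤ M' * |x - z₀| := hlip z₀ hzIcc x hx
      _ ≤ M' * (2 * c) := by
          apply mul_le_mul_of_nonneg_left _ hM'nn
          rw [abs_sub_le_iff] at *
          constructor <;> [skip; skip] <;> nlinarith [hx.1, hx.2, hz1, hz2]
  have hVz : 0 ≤ V z₀ := hVnn z₀ hzIcc
  have hvz : v z₀ = r₀ * (1 + V z₀) := by rw [hv, hr]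
  -- values of the sqrt terms
  have hsp : Real.sqrt (c * |mp|) = c * (1 + V c) := by
    have h1 : 0 ≤ 1 + V c := by linarith [hVnn c hcIcc]
    have : c * |mp| = (c * (1 + V c)) ^ 2 := by
      rw [hmp, abs_of_nonneg (by positivity)]; ring
    rw [this, Real.sqrt_sq (by positivity)]
  have hsm : Real.sqrt (c * |mm|) = c * (1 + V (-c)) := by
    have h1 : 0 ≤ 1 + V (-c) := by linarith [hVnn (-c) hncIcc]
    have : c * |mm| = (c * (1 + V (-c))) ^ 2 := by
      rw [hmm, abs_neg, abs_of_nonneg (by positivity)]; ring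
    rw [this, Real.sqrt_sq (by positivity)]
  rw [hvz, hsp, hsm]
  constructor
  · apply stmt12_key c r₀ (1 + V z₀) (1 + V c) M' (V' z₀) z₀ hc hr₀pos hr₀le
      (by linarith [hr₀sq]) (by linarith) (by linarith [hVnn c hcIcc]) hkey hM'nn
    · have := hdiff c hcIcc
      rw [abs_sub_le_iff] at this
      linarith [this.2]
    · have := hdiff c hcIcc
      rw [abs_sub_le_iff] at this
      linarith [this.1]
  · apply stmt12_key c r₀ (1 + V z₀) (1 + V (-c)) M' (V' z₀) z₀ hc hr₀pos hr₀le
      (by linarith [hr₀sq]) (by linarith) (by linarith [hVnn (-c) hncIcc]) hkey hM'nn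
    · have := hdiff (-c) hncIcc
      rw [abs_sub_le_iff] at this
      linarith [this.2]
    · have := hdiff (-c) hncIcc
      rw [abs_sub_le_iff] at this
      linarith [this.1]
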